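/- arXiv:2201.10157 — 3 statements merged into one kernel-verified Lean document; each statement's English description precedes it below -/
import Mathlib

section
/- For the normalized SEIRS system with ν = 0 and R₀ = (β σ)/((γ+b)(σ+b)) > 1, the endemic infected fraction I* = ((R₀−1)/R₀)·(1/ζ), where ζ = ((γ+b)(σ+b)(ω+b) − ωγσ)/(σ b (ω+b)), satisfies 0 < I* < 1. -/
theorem seirs_endemic_Istar_in_unit_interval (b β γ σ ω : ℝ)
    (hb : 0 < b) (hβ : 0 < β) (hγ : 0 < γ) (hσ : 0 < σ) (hω : 0 < ω)
    (hR : (β * σ) / ((γ + b) * (σ + b)) > 1) :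
    let R₀ := (β * σ) / ((γ + b) * (σ + b))
    let ζ := ((γ + b) * (σ + b) * (ω + b) - ω * γ * σ) / (σ * b * (ω + b))
    let Istar := ((R₀ - 1) / R₀) / ζ
    0 < Istar ∧ Istar < 1 := by
  intro R₀ ζ Istar
  have hden : 0 < σ * b * (ω + b) := by positivity
  have hζ1 : 1 < ζ := by
    rw [show ζ = ((γ + b) * (σ + b) * (ω + b) - ω * γ * σ) / (σ * b * (ω + b)) from rfl,
      lt_div_iff₀ hden]
    nlinarith [mul_pos (mul_pos hγ hσ) hb, mul_pos (mul_pos hγ hb) hω, mul_pos (mul_pos hγ hb) hb, mul_pos (mul_pos hb hb) hω, mul_pos (mul_pos hb hb) hb]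
  have hζ0 : 0 < ζ := by linarith
  have hR1 : 1 < R₀ := hR
  have hfrac : 0 < (R₀ - 1) / R₀ := div_pos (by linarith) (by linarith)
  have hfrac1 : (R₀ - 1) / R₀ < 1 := by
    rw [div_lt_one (by linarith)]; linarith
  refine ⟨div_pos hfrac hζ0, ?_⟩
  rw [show Istar = ((R₀ - 1) / R₀) / ζ from rfl, div_lt_one hζ0]
  linarith
end

section
/- With ν = 0 and R₀ > 1, the ratio φ := γω(R₀−1)/(β(ω+b) − γω) satisfies 0 < φ < 1, where R₀ = βσ/((γ+b)(σ+b)). -/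
theorem phi_in_unit_interval (b β γ σ ω : ℝ)
    (hb : 0 < b) (hβ : 0 < β) (hγ : 0 < γ) (hσ : 0 < σ) (hω : 0 < ω)
    (hR : β * σ / ((γ + b) * (σ + b)) > 1) :
    let R₀ := β * σ / ((γ + b) * (σ + b))
    let φ := γ * ω * (R₀ - 1) / (β * (ω + b) - γ * ω)
    0 < φ ∧ φ < 1 := by
  intro R₀ φ
  have hD : 0 < (γ + b) * (σ + b) := by positivity
  have h1 : (γ + b) * (σ + b) < β * σ := by
    rw [gt_iff_lt, lt_div_iff₀ hD] at hR; linarith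
  have hβγ : γ + b < β := by nlinarith
  have hden : 0 < β * (ω + b) - γ * ω := by nlinarith
  have hR1 : (1 : ℝ) < R₀ := hR
  have hnum : 0 < γ * ω * (R₀ - 1) :=
    mul_pos (mul_pos hγ hω) (by linarith)
  constructor
  · exact div_pos hnum hden
  · rw [div_lt_one hden]
    have hRγ : R₀ * (γ * ω) < β * ω := by
      show β * σ / ((γ + b) * (σ + b)) * (γ * ω) < β * ω
      rw [div_mul_eq_mul_div, div_lt_iff₀ hD]
      nlinarith [mul_pos (mul_pos hβ hω) (show (0:ℝ) < (γ+b)*(σ+b) - γ*σ by nlinarith)]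
    nlinarith
end

section
/- In the scalar logistic-type output equation ẏ = (β − (μ+γ) − (β/α)y)·y: if y : ℝ → (0,∞) is a solution with ẏ(t) ≠ 0, then −(1/ẏ(t))·(d/dt)(ẏ/y)(t) = β/α and (ẏ/y)(t) + μ + (β/α)y(t) = β − γ. Hence β/α and β − γ are determined by y. -/
theorem logistic_output_identifiability (α β γ μ : ℝ) (y : ℝ → ℝ)
    (hα0 : 0 < α) (hα1 : α ≤ 1) (hβ : 0 < β) (hγ : 0 < γ) (hμ : 0 < μ)
    (hypos : ∀ t, 0 < y t)
    (hy : ∀ t, HasDerivAt y ((β - (μ + γ) - (β / α) * y t) * y t) t)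
    (hy2 : Differentiable ℝ (deriv y)) :
    ∀ t, deriv y t ≠ 0 →
      (-(1 / deriv y t)) * deriv (fun s => deriv y s / y s) t = β / α ∧
      deriv y t / y t + μ + (β / α) * y t = β - γ := by
  intro t ht
  have hyne : ∀ s, y s ≠ 0 := fun s => (hypos s).ne'
  have hder : ∀ s, deriv y s = (β - (μ + γ) - (β / α) * y s) * y s := fun s => (hy s).deriv
  have hfun : (fun s => deriv y s / y s) = fun s => β - (μ + γ) - (β / α) * y s := by
    funext s
    rw [hder s, mul_div_assoc, div_self (hyne s), mul_one]
  have hd : HasDerivAt (fun s => β - (μ + γ) - (β / α) * y s)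
      (-(β / α * ((β - (μ + γ) - (β / α) * y t) * y t))) t :=
    ((hy t).const_mul (β / α)).const_sub _
  have hderiv2 : deriv (fun s => deriv y s / y s) t
      = -(β / α * ((β - (μ + γ) - (β / α) * y t) * y t)) := by
    rw [hfun]; exact hd.deriv
  constructor
  · rw [hderiv2, ← hder t]
    field_simp
  · rw [hder t, mul_div_assoc, div_self (hyne t), mul_one]
    ring
end
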